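/- Let $X = (X_1, X_2)$ with $\|X_1\|_2 = \|X_2\|_2 = 1$, $X_1^T X_2 = -\hat\rho$, $0 < \hat\rho < 1$, and $\hat\varphi^2 := 1-\hat\rho$. Let $\beta^0 = (\beta_1^0, \beta_2^0)$ with $\beta_1^0 \ge \beta_2^0 > 0$ and suppose $\lambda/\hat\varphi^2 \le \beta_2^0$. Then $\beta^* := (\beta_1^0 - \lambda/\hat\varphi^2, \beta_2^0 - \lambda/\hat\varphi^2)$ minimizes $\beta \mapsto \|X(\beta - \beta^0)\|_2^2 + 2\lambda\|\beta\|_1$ over $\mathbb{R}^2$, and $\|X(\beta^* - \beta^0)\|_2^2 = 2\lambda^2/\hat\varphi^2$. -/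

import Mathlib

open scoped RealInnerProductSpace

/-- noiseless Lasso with p = s₀ = 2, Case 1. -/
theorem stmt4 (n : ℕ) (X1 X2 : EuclideanSpace ℝ (Fin n)) (ρ lam β10 β20 : ℝ)
    (h1 : ‖X1‖ = 1) (h2 : ‖X2‖ = 1) (hρ : ⟪X1, X2⟫ = -ρ)
    (hρ0 : 0 < ρ) (hρ1 : ρ < 1) (hlam : 0 < lam)
    (hβ : β10 ≥ β20) (hβ2 : 0 < β20)
    (hcase : lam / (1 - ρ) ≤ β20) :
    (∀ b1 b2 : ℝ,
      ‖((β10 - lam / (1 - ρ)) - β10) • X1 + ((β20 - lam / (1 - ρ)) - β20) • X2‖ ^ 2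
          + 2 * lam * (|β10 - lam / (1 - ρ)| + |β20 - lam / (1 - ρ)|)
        ≤ ‖(b1 - β10) • X1 + (b2 - β20) • X2‖ ^ 2 + 2 * lam * (|b1| + |b2|)) ∧
    ‖((β10 - lam / (1 - ρ)) - β10) • X1 + ((β20 - lam / (1 - ρ)) - β20) • X2‖ ^ 2
      = 2 * lam ^ 2 / (1 - ρ) := by
  have hφ : (0:ℝ) < 1 - ρ := by linarith
  have key : ∀ u v : ℝ, ‖u • X1 + v • X2‖ ^ 2 = u ^ 2 + v ^ 2 - 2 * ρ * u * v := by
    intro u v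
    rw [norm_add_sq_real, real_inner_smul_left, real_inner_smul_right, hρ, norm_smul, norm_smul,
      h1, h2]
    simp [mul_pow, sq_abs]
    ring
  set t := lam / (1 - ρ) with ht
  have ht0 : 0 < t := div_pos hlam hφ
  have ht2 : t ≤ β20 := hcase
  have ht1 : t ≤ β10 := le_trans ht2 hβ
  have htlam : t * (1 - ρ) = lam := div_mul_cancel₀ lam (ne_of_gt hφ)
  constructor
  · intro b1 b2
    rw [key, key]
    have e1 : |β10 - t| = β10 - t := abs_of_nonneg (by linarith)
    have e2 : |β20 - t| = β20 - t := abs_of_nonneg (by linarith)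
    have f1 : b1 ≤ |b1| := le_abs_self b1
    have f2 : b2 ≤ |b2| := le_abs_self b2
    rw [e1, e2, ← htlam]
    nlinarith [mul_nonneg hρ0.le (sq_nonneg (b1 - β10 + t - (b2 - β20 + t))),
      mul_nonneg hφ.le (sq_nonneg (b1 - β10 + t)),
      mul_nonneg hφ.le (sq_nonneg (b2 - β20 + t)),
      mul_nonneg (mul_nonneg ht0.le hφ.le) (sub_nonneg.2 f1),
      mul_nonneg (mul_nonneg ht0.le hφ.le) (sub_nonneg.2 f2)]
  · rw [key]
    have e : β10 - t - β10 = -t := by ring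
    have e' : β20 - t - β20 = -t := by ring
    rw [e, e']
    have h3 : 2 * lam ^ 2 / (1 - ρ) = 2 * lam * t := by
      rw [ht]; field_simp
    rw [h3, ← htlam]
    ring
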